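/- Let A > 0, c ∈ ℝ, and x ∈ (−A, A). Then the principal value integral lim_{ε→0⁺} ∫_{{y ∈ (−A,A) : |y − x| > ε}} (y² + A²/2 + c)·√(A² − y²)/(x − y) dy exists and equals π·(x³ + c·x). -/

import Mathlib

noncomputable def Hf (A c x y : ℝ) : ℝ :=
  (A^2 - y^2) * Real.sqrt (A^2 - y^2) / 3
  - x * (y / 2 * Real.sqrt (A^2 - y^2) + A^2 / 2 * Real.arcsin (y / A))
  + (x^2 + A^2/2 + c) * (x * Real.arcsin (y / A) - Real.sqrt (A^2 - y^2)
      + Real.sqrt (A^2 - x^2) * Real.log (A^2 - x*y + Real.sqrt (A^2 - x^2) * Real.sqrt (A^2 - y^2)))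

noncomputable def Ff (A c x y : ℝ) : ℝ :=
  Hf A c x y - (x^2 + A^2/2 + c) * Real.sqrt (A^2 - x^2) * Real.log (y - x)

set_option maxHeartbeats 1000000 in
lemma Ff_hasDerivAt (A c x y : ℝ) (hA : 0 < A) (hx1 : -A < x) (hx2 : x < A)
    (hy1 : -A < y) (hy2 : y < A) (hyx : y ≠ x) :
    HasDerivAt (Ff A c x) ((y ^ 2 + A ^ 2 / 2 + c) * Real.sqrt (A ^ 2 - y ^ 2) / (x - y)) y := by
  set g := Real.sqrt (A^2 - y^2) with hgdef
  set s := Real.sqrt (A^2 - x^2) with hsdef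
  have hAy : 0 < A^2 - y^2 := by nlinarith
  have hAx : 0 < A^2 - x^2 := by nlinarith
  have hg : 0 < g := Real.sqrt_pos.mpr hAy
  have hs : 0 < s := Real.sqrt_pos.mpr hAx
  have hg2 : g^2 = A^2 - y^2 := Real.sq_sqrt hAy.le
  have hs2 : s^2 = A^2 - x^2 := Real.sq_sqrt hAx.le
  have hu : 0 < A^2 - x*y + s*g := by nlinarith [abs_mul_abs_self x, abs_mul_abs_self y, mul_pos hs hg, abs_nonneg x, abs_nonneg y, abs_lt.mpr ⟨hx1, hx2⟩, abs_lt.mpr ⟨hy1, hy2⟩, mul_lt_mul'' (abs_lt.mpr ⟨hx1, hx2⟩) (abs_lt.mpr ⟨hy1, hy2⟩) (abs_nonneg x) (abs_nonneg y), neg_abs_le (x*y), abs_mul x y]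
  -- inner derivative of A^2 - y^2
  have hinner : HasDerivAt (fun t : ℝ => A^2 - t^2) (-(2*y)) y := by
    simpa using ((hasDerivAt_pow 2 y).const_sub (A^2))
  have hdg : HasDerivAt (fun t : ℝ => Real.sqrt (A^2 - t^2)) (-y/g) y := by
    have := (Real.hasDerivAt_sqrt (ne_of_gt hAy)).comp y hinner
    refine this.congr_deriv ?_
    field_simp [hgdef]
    ring
  have harcsin : HasDerivAt (fun t : ℝ => Real.arcsin (t / A)) (1/g) y := by
    have hin : HasDerivAt (fun t : ℝ => t / A) (1/A) y := (hasDerivAt_id y).div_const A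
    have h1 : y / A ≠ -1 := by
      intro h; apply absurd hy1; rw [show y = -A by field_simp at h; linarith]; simp
    have h2 : y / A ≠ 1 := by
      intro h; apply absurd hy2; rw [show y = A by field_simp at h; linarith]; simp
    have := (Real.hasDerivAt_arcsin h1 h2).comp y hin
    refine this.congr_deriv ?_
    have : Real.sqrt (1 - (y/A)^2) = g / A := by
      rw [show 1 - (y/A)^2 = (A^2 - y^2)/A^2 by field_simp, Real.sqrt_div hAy.le,
        Real.sqrt_sq hA.le]
    rw [this]; field_simp
  have hdu : HasDerivAt (fun t : ℝ => A^2 - x*t + s * Real.sqrt (A^2 - t^2)) (-x + s * (-y/g)) y := by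
    have h1 : HasDerivAt (fun t : ℝ => A^2 - x*t) (-x) y := by
      simpa using ((hasDerivAt_id y).const_mul x).const_sub (A^2)
    exact h1.add (hdg.const_mul s)
  have hlogu : HasDerivAt (fun t : ℝ => Real.log (A^2 - x*t + s * Real.sqrt (A^2 - t^2)))
      ((A^2 - x*y + s*g)⁻¹ * (-x + s * (-y/g))) y := by
    exact (Real.hasDerivAt_log (ne_of_gt hu)).comp y hdu
  have hlogyx : HasDerivAt (fun t : ℝ => Real.log (t - x)) ((y - x)⁻¹) y := by
    have h1 : HasDerivAt (fun t : ℝ => t - x) 1 y := (hasDerivAt_id y).sub_const x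
    have := (Real.hasDerivAt_log (sub_ne_zero.mpr hyx)).comp y h1
    rw [mul_one] at this; exact this
  have hT1 : HasDerivAt (fun t : ℝ => (A^2 - t^2) * Real.sqrt (A^2 - t^2) / 3)
      ((-(2*y) * g + (A^2 - y^2) * (-y/g)) / 3) y := (hinner.mul hdg).div_const 3
  have hT2 : HasDerivAt (fun t : ℝ => x * (t / 2 * Real.sqrt (A^2 - t^2) + A^2/2 * Real.arcsin (t / A)))
      (x * ((1/2 * g + y/2 * (-y/g)) + A^2/2 * (1/g))) y := by
    exact ((((hasDerivAt_id y).div_const 2).mul hdg).add ((harcsin.const_mul (A^2/2)))).const_mul x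
  have hT3 : HasDerivAt (fun t : ℝ => (x^2 + A^2/2 + c) * (x * Real.arcsin (t / A) - Real.sqrt (A^2 - t^2)
      + s * Real.log (A^2 - x*t + s * Real.sqrt (A^2 - t^2))))
      ((x^2 + A^2/2 + c) * (x * (1/g) - (-y/g) + s * ((A^2 - x*y + s*g)⁻¹ * (-x + s * (-y/g))))) y := by
    exact (((harcsin.const_mul x).sub hdg).add (hlogu.const_mul s)).const_mul (x^2 + A^2/2 + c)
  have hT4 : HasDerivAt (fun t : ℝ => (x^2 + A^2/2 + c) * s * Real.log (t - x))
      ((x^2 + A^2/2 + c) * s * (y - x)⁻¹) y := hlogyx.const_mul _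
  have hF : HasDerivAt (Ff A c x)
      (((-(2*y) * g + (A^2 - y^2) * (-y/g)) / 3
        - x * ((1/2 * g + y/2 * (-y/g)) + A^2/2 * (1/g))
        + (x^2 + A^2/2 + c) * (x * (1/g) - (-y/g) + s * ((A^2 - x*y + s*g)⁻¹ * (-x + s * (-y/g)))))
        - (x^2 + A^2/2 + c) * s * (y - x)⁻¹) y := by
    unfold Ff Hf
    exact ((hT1.sub hT2).add hT3).sub hT4
  have hyx' : y - x ≠ 0 := sub_ne_zero.mpr hyx
  have hxy' : x - y ≠ 0 := sub_ne_zero.mpr (Ne.symm hyx)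
  have e3 : s * ((A^2 - x*y + s*g)⁻¹ * (-x + s * (-y/g))) = s*(y-x)⁻¹ - s^2/((y-x)*g) := by
    have hune : (A^2 - x*y + s*g) ≠ 0 := ne_of_gt hu
    field_simp
    linear_combination g * hs2 - s * hg2
  convert hF using 1
  rw [e3, hs2]
  field_simp
  linear_combination ((y-x)*(3*(2*y^2+A^2+2*c) + (x-y)*(4*y+3*x))) * hg2

lemma u_pos (A x y : ℝ) (hA : 0 < A) (hx1 : -A < x) (hx2 : x < A) (hy1 : -A ≤ y) (hy2 : y ≤ A) :
    0 < A^2 - x*y + Real.sqrt (A^2 - x^2) * Real.sqrt (A^2 - y^2) := by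
  have h1 : x*y ≤ (|x| * |y|) := by rw [← abs_mul]; exact le_abs_self _
  have hax : |x| < A := abs_lt.mpr ⟨hx1, hx2⟩
  have hay : |y| ≤ A := abs_le.mpr ⟨hy1, hy2⟩
  have h2 : 0 ≤ Real.sqrt (A^2 - x^2) * Real.sqrt (A^2 - y^2) :=
    mul_nonneg (Real.sqrt_nonneg _) (Real.sqrt_nonneg _)
  have h3 : (|x| * |y|) ≤ (|x| * A) := mul_le_mul_of_nonneg_left hay (abs_nonneg x)
  have h4 : (|x| * A) < A*A := by nlinarith [abs_nonneg x]
  nlinarith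

lemma Hf_contAt (A c x y : ℝ)
    (hu : A^2 - x*y + Real.sqrt (A^2 - x^2) * Real.sqrt (A^2 - y^2) ≠ 0) :
    ContinuousAt (Hf A c x) y := by
  have hsq : ContinuousAt (fun t : ℝ => Real.sqrt (A^2 - t^2)) y := by fun_prop
  have harc : ContinuousAt (fun t : ℝ => Real.arcsin (t / A)) y :=
    (Real.continuous_arcsin.comp (continuous_id.div_const A)).continuousAt
  have hlog : ContinuousAt
      (fun t : ℝ => Real.log (A^2 - x*t + Real.sqrt (A^2 - x^2) * Real.sqrt (A^2 - t^2))) y :=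
    ContinuousAt.log (by fun_prop) hu
  unfold Hf
  exact ((ContinuousAt.mul (by fun_prop) hsq).div_const 3
      |>.sub ((((continuousAt_id.div_const 2).mul hsq).add (harc.const_mul (A^2/2))).const_mul x))
    |>.add ((((harc.const_mul x).sub hsq).add (hlog.const_mul (Real.sqrt (A^2-x^2)))).const_mul
      (x^2 + A^2/2 + c))

lemma Ff_contAt (A c x y : ℝ)
    (hu : A^2 - x*y + Real.sqrt (A^2 - x^2) * Real.sqrt (A^2 - y^2) ≠ 0) (hyx : y ≠ x) :
    ContinuousAt (Ff A c x) y := by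
  have hlyx : ContinuousAt (fun t : ℝ => Real.log (t - x)) y :=
    ContinuousAt.log (by fun_prop) (sub_ne_zero.mpr hyx)
  unfold Ff
  exact (Hf_contAt A c x y hu).sub
    (hlyx.const_mul ((x^2 + A^2/2 + c) * Real.sqrt (A^2 - x^2)))


lemma Ff_endpoints (A c x : ℝ) (hA : 0 < A) (hx1 : -A < x) (hx2 : x < A) :
    Ff A c x A - Ff A c x (-A) = Real.pi * (x^3 + c*x) := by
  have hAne : (A:ℝ) ≠ 0 := ne_of_gt hA
  unfold Ff Hf
  rw [show A^2 - A^2 = (0:ℝ) by ring, show A^2 - (-A)^2 = (0:ℝ) by ring, Real.sqrt_zero,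
    div_self hAne, show (-A)/A = (-1:ℝ) by field_simp, Real.arcsin_one, Real.arcsin_neg_one,
    show A^2 - x*A + Real.sqrt (A^2-x^2) * 0 = A*(A-x) by ring,
    show A^2 - x*(-A) + Real.sqrt (A^2-x^2) * 0 = A*(A+x) by ring,
    Real.log_mul hAne (ne_of_gt (by linarith : (0:ℝ) < A - x)),
    Real.log_mul hAne (ne_of_gt (by linarith : (0:ℝ) < A + x)),
    show -A - x = -(A+x) by ring, Real.log_neg_eq_log]
  ring

open Filter

/-- the principal value integral
`p.v. ∫_{-A}^{A} (y² + A²/2 + c)√(A² - y²)/(x - y) dy` exists for `x ∈ (-A, A)` and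
equals `π (x³ + c x)` (the cut equation for the quartic potential). -/
theorem stmt_19 (A c : ℝ) (hA : 0 < A) (x : ℝ) (hx : x ∈ Set.Ioo (-A) A) :
    Tendsto (fun ε : ℝ =>
        ∫ y in {y : ℝ | y ∈ Set.Ioo (-A) A ∧ ε < |y - x|},
          (y ^ 2 + A ^ 2 / 2 + c) * Real.sqrt (A ^ 2 - y ^ 2) / (x - y))
      (nhdsWithin 0 (Set.Ioi 0)) (nhds (Real.pi * (x ^ 3 + c * x))) := by
  obtain ⟨hx1, hx2⟩ := hx
  have hδ : 0 < min (x + A) (A - x) := lt_min (by linarith) (by linarith)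
  have key : ∀ ε : ℝ, 0 < ε → ε < min (x + A) (A - x) →
      (∫ y in {y : ℝ | y ∈ Set.Ioo (-A) A ∧ ε < |y - x|},
          (y ^ 2 + A ^ 2 / 2 + c) * Real.sqrt (A ^ 2 - y ^ 2) / (x - y))
        = (Ff A c x (x - ε) - Ff A c x (-A)) + (Ff A c x A - Ff A c x (x + ε)) := by
    intro ε hε0 hεδ
    have hε1 : -A < x - ε := by have := lt_of_lt_of_le hεδ (min_le_left _ _); linarith
    have hε2 : x + ε < A := by have := lt_of_lt_of_le hεδ (min_le_right _ _); linarith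
    have hset : {y : ℝ | y ∈ Set.Ioo (-A) A ∧ ε < |y - x|}
        = Set.Ioo (-A) (x - ε) ∪ Set.Ioo (x + ε) A := by
      ext y
      simp only [Set.mem_setOf_eq, Set.mem_Ioo, Set.mem_union, lt_abs]
      constructor
      · rintro ⟨⟨h1, h2⟩, h3 | h3⟩
        · right; exact ⟨by linarith, h2⟩
        · left; exact ⟨h1, by linarith⟩
      · rintro (⟨h1, h2⟩ | ⟨h1, h2⟩)
        · exact ⟨⟨h1, by linarith⟩, Or.inr (by linarith)⟩
        · exact ⟨⟨by linarith, h2⟩, Or.inl (by linarith)⟩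
    have hcont1 : ContinuousOn (fun y : ℝ =>
        (y ^ 2 + A ^ 2 / 2 + c) * Real.sqrt (A ^ 2 - y ^ 2) / (x - y)) (Set.Icc (-A) (x - ε)) := by
      apply ContinuousOn.div (by fun_prop) (by fun_prop)
      intro y hy
      exact ne_of_gt (by have := hy.2; linarith : (0:ℝ) < x - y)
    have hcont2 : ContinuousOn (fun y : ℝ =>
        (y ^ 2 + A ^ 2 / 2 + c) * Real.sqrt (A ^ 2 - y ^ 2) / (x - y)) (Set.Icc (x + ε) A) := by
      apply ContinuousOn.div (by fun_prop) (by fun_prop)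
      intro y hy
      exact ne_of_lt (by have := hy.1; linarith : x - y < 0)
    have hint1 : MeasureTheory.IntegrableOn (fun y : ℝ =>
        (y ^ 2 + A ^ 2 / 2 + c) * Real.sqrt (A ^ 2 - y ^ 2) / (x - y)) (Set.Ioo (-A) (x - ε)) :=
      (hcont1.integrableOn_Icc).mono_set Set.Ioo_subset_Icc_self
    have hint2 : MeasureTheory.IntegrableOn (fun y : ℝ =>
        (y ^ 2 + A ^ 2 / 2 + c) * Real.sqrt (A ^ 2 - y ^ 2) / (x - y)) (Set.Ioo (x + ε) A) :=
      (hcont2.integrableOn_Icc).mono_set Set.Ioo_subset_Icc_self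
    have hdisj : Disjoint (Set.Ioo (-A) (x - ε)) (Set.Ioo (x + ε) A) := by
      rw [Set.disjoint_left]
      rintro y ⟨_, h2⟩ ⟨h3, _⟩
      linarith
    rw [hset, MeasureTheory.setIntegral_union hdisj measurableSet_Ioo hint1 hint2]
    have e1 : (∫ y in Set.Ioo (-A) (x - ε),
        (y ^ 2 + A ^ 2 / 2 + c) * Real.sqrt (A ^ 2 - y ^ 2) / (x - y))
        = Ff A c x (x - ε) - Ff A c x (-A) := by
      rw [← MeasureTheory.integral_Ioc_eq_integral_Ioo,
        ← intervalIntegral.integral_of_le (by linarith : -A ≤ x - ε)]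
      apply intervalIntegral.integral_eq_sub_of_hasDerivAt_of_le (by linarith)
      · intro y hy
        refine (Ff_contAt A c x y (ne_of_gt (u_pos A x y hA hx1 hx2 hy.1 (by linarith [hy.2]))) ?_).continuousWithinAt
        exact ne_of_lt (by linarith [hy.2])
      · intro y hy
        exact Ff_hasDerivAt A c x y hA hx1 hx2 hy.1 (by linarith [hy.2])
          (ne_of_lt (by linarith [hy.2]))
      · rw [intervalIntegrable_iff_integrableOn_Ioc_of_le (by linarith)]
        exact (hcont1.integrableOn_Icc).mono_set Set.Ioc_subset_Icc_self
    have e2 : (∫ y in Set.Ioo (x + ε) A,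
        (y ^ 2 + A ^ 2 / 2 + c) * Real.sqrt (A ^ 2 - y ^ 2) / (x - y))
        = Ff A c x A - Ff A c x (x + ε) := by
      rw [← MeasureTheory.integral_Ioc_eq_integral_Ioo,
        ← intervalIntegral.integral_of_le (by linarith : x + ε ≤ A)]
      refine intervalIntegral.integral_eq_sub_of_hasDerivAt_of_le (f := Ff A c x)
        (by linarith) ?_ ?_ ?_
      · intro y hy
        refine (Ff_contAt A c x y (ne_of_gt (u_pos A x y hA hx1 hx2 (by linarith [hy.1]) hy.2)) ?_).continuousWithinAt
        exact ne_of_gt (by linarith [hy.1])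
      · intro y hy
        exact Ff_hasDerivAt A c x y hA hx1 hx2 (by linarith [hy.1]) hy.2
          (ne_of_gt (by linarith [hy.1]))
      · rw [intervalIntegrable_iff_integrableOn_Ioc_of_le (by linarith)]
        exact (hcont2.integrableOn_Icc).mono_set Set.Ioc_subset_Icc_self
    rw [e1, e2]
  have hK := Ff_endpoints A c x hA hx1 hx2
  have hshift : ∀ ε : ℝ, (Ff A c x (x - ε) - Ff A c x (-A)) + (Ff A c x A - Ff A c x (x + ε))
      = (Ff A c x A - Ff A c x (-A)) + (Hf A c x (x - ε) - Hf A c x (x + ε)) := by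
    intro ε
    unfold Ff
    rw [show x - ε - x = -ε by ring, show x + ε - x = ε by ring, Real.log_neg_eq_log]
    ring
  have hHcont : ContinuousAt (Hf A c x) x :=
    Hf_contAt A c x x (ne_of_gt (u_pos A x x hA hx1 hx2 hx1.le hx2.le))
  have hlim : Tendsto (fun ε : ℝ => Real.pi * (x ^ 3 + c * x)
      + (Hf A c x (x - ε) - Hf A c x (x + ε))) (nhds 0) (nhds (Real.pi * (x ^ 3 + c * x))) := by
    have t1 : Tendsto (fun ε : ℝ => x - ε) (nhds 0) (nhds x) := by
      simpa [Pi.sub_def] using (continuous_const.sub continuous_id).tendsto (0:ℝ)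
    have t2 : Tendsto (fun ε : ℝ => x + ε) (nhds 0) (nhds x) := by
      simpa [Pi.add_def] using (continuous_const.add continuous_id).tendsto (0:ℝ)
    have h := Tendsto.const_add (Real.pi * (x ^ 3 + c * x))
      ((hHcont.tendsto.comp t1).sub (hHcont.tendsto.comp t2))
    simp only [Function.comp, sub_self, add_zero] at h
    exact h
  apply Tendsto.congr' _ (hlim.mono_left nhdsWithin_le_nhds)
  filter_upwards [Ioo_mem_nhdsGT_of_mem (Set.left_mem_Ico.mpr hδ)] with ε hε
  rw [key ε hε.1 hε.2, hshift ε, hK]
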